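/- Every strongly indecomposable separable metrizable space X admits a metrizable compactification that is indecomposable; i.e., there is a homeomorphic embedding h of X into the Hilbert cube [0,1]^ω such that the closure of h[X] is indecomposable. -/

import Mathlib

/-- A space is *strongly indecomposable* if for every two nonempty disjoint open
sets `U` and `V` there are closed sets `A`, `B` covering the space, each meeting `U`,
with `A ∩ B ⊆ V`. -/
def StronglyIndecomposable (X : Type*) [TopologicalSpace X] : Prop :=
  ∀ U V : Set X, IsOpen U → IsOpen V → U.Nonempty → V.Nonempty → Disjoint U V →
    ∃ A B : Set X, IsClosed A ∧ IsClosed B ∧ A ∪ B = Set.univ ∧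
      (A ∩ U).Nonempty ∧ (B ∩ U).Nonempty ∧ A ∩ B ⊆ V

/-- A space is *indecomposable* if every connected subset is dense or nowhere dense. -/
def IndecomposableSpace (X : Type*) [TopologicalSpace X] : Prop :=
  ∀ C : Set X, IsConnected C → Dense C ∨ IsNowhereDense C

open Set Topology TopologicalSpace Filter

/-- Extending a countable product along the encoding into an `ℕ`-indexed product
is an embedding. -/
lemma exists_extend_embedding {J : Type*} [Encodable J] {α : Type*} [TopologicalSpace α]
    (z0 : α) :
    ∃ e : (J → α) → (ℕ → α), Topology.IsEmbedding e ∧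
      ∀ (y : J → α) (j : J), e y (Encodable.encode j) = y j := by
  classical
  set e : (J → α) → (ℕ → α) :=
    fun y n => if hn : ∃ j : J, Encodable.encode j = n then y hn.choose else z0 with he
  have hkey : ∀ (y : J → α) (j : J), e y (Encodable.encode j) = y j := by
    intro y j
    have hn : ∃ j' : J, Encodable.encode j' = Encodable.encode j := ⟨j, rfl⟩
    simp only [he, dif_pos hn]
    exact congrArg y (Encodable.encode_injective hn.choose_spec)
  have hec : Continuous e := by
    refine continuous_pi fun n => ?_
    by_cases hn : ∃ j : J, Encodable.encode j = n
    · simpa only [he, dif_pos hn] using continuous_apply hn.choose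
    · simpa only [he, dif_neg hn] using continuous_const
  have hproj : Continuous fun (z : ℕ → α) (j : J) => z (Encodable.encode j) :=
    continuous_pi fun j => continuous_apply _
  have hcomp : (fun (z : ℕ → α) (j : J) => z (Encodable.encode j)) ∘ e = id := by
    funext y j
    exact hkey y j
  refine ⟨e, ⟨Topology.IsInducing.of_comp hec hproj ?_, ?_⟩, hkey⟩
  · rw [hcomp]
    exact Topology.IsInducing.id
  · intro y y' hyy'
    funext j
    rw [← hkey y j, ← hkey y' j, hyy']

/-- Abstract core: if a space `Z` has a dense continuous image of `X` with enough
"closed splittings", then `Z` is indecomposable. -/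
lemma indecomposable_core {Z : Type*} [TopologicalSpace Z] [RegularSpace Z]
    {X : Type*} [TopologicalSpace X] {fY : X → Z} (hdr : DenseRange fY) (hc : Continuous fY)
    {B : Set (Set X)} (hB : IsTopologicalBasis B)
    (P : ∀ U V : Set X, U ∈ B → V ∈ B → U.Nonempty → V.Nonempty → Disjoint U V →
      ∃ A A' : Set X, closure (fY '' A) ∪ closure (fY '' A') = univ ∧
        (A ∩ U).Nonempty ∧ (A' ∩ U).Nonempty ∧
        closure (fY '' A) ∩ closure (fY '' A') ⊆ closure (fY '' V)) :
    IndecomposableSpace Z := by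
  intro C hC
  by_contra hcon
  push_neg at hcon
  obtain ⟨hnd, hnwd⟩ := hcon
  obtain ⟨z₀, hz₀⟩ : (interior (closure C)).Nonempty := Set.nonempty_iff_ne_empty.2 hnwd
  obtain ⟨z₁, hz₁⟩ : ∃ z, z ∉ closure C := by
    by_contra h'
    push_neg at h'
    exact hnd fun z => h' z
  obtain ⟨s₁, hs₁n, hs₁c, hs₁sub⟩ :=
    exists_mem_nhds_isClosed_subset (isClosed_closure.isOpen_compl.mem_nhds hz₁)
  obtain ⟨x₀, hx₀⟩ : ∃ x, fY x ∈ interior (closure C) :=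
    hdr.exists_mem_open isOpen_interior ⟨z₀, hz₀⟩
  obtain ⟨x₁, hx₁⟩ : ∃ x, fY x ∈ interior s₁ :=
    hdr.exists_mem_open isOpen_interior ⟨z₁, mem_interior_iff_mem_nhds.2 hs₁n⟩
  obtain ⟨U, hUB, hxU, hUsub⟩ := hB.exists_subset_of_mem_open
    (show x₀ ∈ fY ⁻¹' interior (closure C) from hx₀) (isOpen_interior.preimage hc)
  obtain ⟨V, hVB, hxV, hVsub⟩ := hB.exists_subset_of_mem_open
    (show x₁ ∈ fY ⁻¹' interior s₁ from hx₁) (isOpen_interior.preimage hc)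
  have hUV : Disjoint U V := by
    rw [Set.disjoint_left]
    intro x hxU' hxV'
    have h1 : fY x ∈ closure C := interior_subset (hUsub hxU')
    have h2 : fY x ∈ s₁ := interior_subset (hVsub hxV')
    exact hs₁sub h2 h1
  obtain ⟨A, A', hcover, hAU, hA'U, hint⟩ := P U V hUB hVB ⟨x₀, hxU⟩ ⟨x₁, hxV⟩ hUV
  have hVs : closure (fY '' V) ⊆ (closure C)ᶜ := by
    have h1 : fY '' V ⊆ s₁ := by
      rintro z ⟨x, hxV', rfl⟩
      exact interior_subset (hVsub hxV')
    calc closure (fY '' V) ⊆ closure s₁ := closure_mono h1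
    _ = s₁ := hs₁c.closure_eq
    _ ⊆ (closure C)ᶜ := hs₁sub
  have hint' : closure (fY '' A) ∩ closure (fY '' A') ⊆ (closure C)ᶜ := hint.trans hVs
  have hdisj : Disjoint (closure (fY '' A))ᶜ (closure (fY '' A'))ᶜ := by
    rw [Set.disjoint_iff_inter_eq_empty, ← Set.compl_union, hcover, Set.compl_univ]
  have hCuv : C ⊆ (closure (fY '' A))ᶜ ∪ (closure (fY '' A'))ᶜ := by
    intro z hz
    rw [← Set.compl_inter]
    exact fun hzin => hint' hzin (subset_closure hz)
  have hmemuniv : ∀ z : Z, z ∈ closure (fY '' A) ∪ closure (fY '' A') := by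
    intro z; rw [hcover]; exact Set.mem_univ z
  rcases hC.isPreconnected.subset_or_subset isClosed_closure.isOpen_compl
      isClosed_closure.isOpen_compl hdisj hCuv with hcase | hcase
  · -- C misses closure (fY '' A), hence C ⊆ closure (fY '' A')
    have hCA' : C ⊆ closure (fY '' A') := fun z hz => (hmemuniv z).resolve_left (hcase hz)
    have hclC : closure C ⊆ closure (fY '' A') := closure_minimal hCA' isClosed_closure
    obtain ⟨xA, hxAA, hxAU⟩ := hAU
    have h1 : fY xA ∈ closure (fY '' A) := subset_closure ⟨xA, hxAA, rfl⟩
    have h2 : fY xA ∈ interior (closure C) := hUsub hxAU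
    have h3 : fY xA ∈ closure (fY '' A') := hclC (interior_subset h2)
    exact hint' ⟨h1, h3⟩ (interior_subset h2)
  · have hCA : C ⊆ closure (fY '' A) := fun z hz => (hmemuniv z).resolve_right (hcase hz)
    have hclC : closure C ⊆ closure (fY '' A) := closure_minimal hCA isClosed_closure
    obtain ⟨xB, hxBA, hxBU⟩ := hA'U
    have h1 : fY xB ∈ closure (fY '' A') := subset_closure ⟨xB, hxBA, rfl⟩
    have h2 : fY xB ∈ interior (closure C) := hUsub hxBU
    have h3 : fY xB ∈ closure (fY '' A) := hclC (interior_subset h2)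
    exact hint' ⟨h3, h1⟩ (interior_subset h2)

/-- Every strongly indecomposable separable metrizable space embeds densely in an
indecomposable metrizable subcontinuum of the Hilbert cube. -/
theorem stronglyIndecomposable_metrizable_indecomposable_compactification
    (X : Type*) [TopologicalSpace X] [TopologicalSpace.SeparableSpace X]
    [TopologicalSpace.MetrizableSpace X] (h : StronglyIndecomposable X) :
    ∃ f : X → (ℕ → Set.Icc (0 : ℝ) 1), Topology.IsEmbedding f ∧
      IndecomposableSpace (closure (Set.range f)) := by
  classical
  letI : MetricSpace X := TopologicalSpace.metrizableSpaceMetric X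
  haveI : SecondCountableTopology X := UniformSpace.secondCountable_of_separable X
  obtain ⟨B, hBc, -, hB⟩ := TopologicalSpace.exists_countable_basis X
  -- the metrization pairs
  set s : Set (Set X × Set X) := {q ∈ B ×ˢ B | closure q.1 ⊆ q.2} with hs_def
  -- the indecomposability pairs
  set T : Set (Set X × Set X) :=
    {q ∈ B ×ˢ B | q.1.Nonempty ∧ q.2.Nonempty ∧ Disjoint q.1 q.2} with hT_def
  haveI : Encodable ↥s := ((hBc.prod hBc).mono (Set.sep_subset _ _)).toEncodable
  haveI : Encodable ↥T := ((hBc.prod hBc).mono (Set.sep_subset _ _)).toEncodable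
  -- Urysohn functions for the metrization pairs
  have keyS : ∀ q : ↥s, ∃ g : X → ℝ, Continuous g ∧ (∀ x, g x ∈ Set.Icc (0:ℝ) 1) ∧
      Set.EqOn g 0 (closure q.1.1) ∧ Set.EqOn g 1 q.1.2ᶜ := by
    intro q
    obtain ⟨⟨h1, h2⟩, h3⟩ := q.2
    have hdis : Disjoint (closure q.1.1) q.1.2ᶜ :=
      Set.disjoint_left.mpr fun x hx hxc => hxc (h3 hx)
    obtain ⟨g, hg0, hg1, hg01⟩ := exists_continuous_zero_one_of_isClosed isClosed_closure
      (hB.isOpen h2).isClosed_compl hdis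
    exact ⟨g, g.continuous, hg01, hg0, hg1⟩
  choose gs hgsc hgs01 hgs0 hgs1 using keyS
  -- data for the indecomposability pairs
  have keyT : ∀ p : ↥T, ∃ (A A' : Set X) (w : X → ℝ),
      IsClosed A ∧ IsClosed A' ∧ A ∪ A' = Set.univ ∧ (A ∩ p.1.1).Nonempty ∧
      (A' ∩ p.1.1).Nonempty ∧ A ∩ A' ⊆ p.1.2 ∧ Continuous w ∧
      (∀ x, w x ∈ Set.Icc (0:ℝ) 1) ∧
      Set.EqOn w 0 (A \ p.1.2) ∧ Set.EqOn w 1 (A' \ p.1.2) := by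
    intro p
    obtain ⟨⟨hU, hV⟩, hUne, hVne, hdisj⟩ := p.2
    obtain ⟨A, A', hAc, hA'c, hcov, hAU, hA'U, hAA'⟩ :=
      h p.1.1 p.1.2 (hB.isOpen hU) (hB.isOpen hV) hUne hVne hdisj
    have hd : Disjoint (A \ p.1.2) (A' \ p.1.2) :=
      Set.disjoint_left.mpr fun x hx hx' => hx.2 (hAA' ⟨hx.1, hx'.1⟩)
    obtain ⟨w, hw0, hw1, hw01⟩ := exists_continuous_zero_one_of_isClosed
      (hAc.sdiff (hB.isOpen hV)) (hA'c.sdiff (hB.isOpen hV)) hd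
    exact ⟨A, A', w, hAc, hA'c, hcov, hAU, hA'U, hAA', w.continuous, hw01, hw0, hw1⟩
  choose Aa Bb ws hwAcl hwBcl hwcover hwAU hwBU hwABV hwc hw01 hw0 hw1 using keyT
  -- the coordinate map
  set F : X → (↥s ⊕ ↥T) → Set.Icc (0:ℝ) 1 := fun x j =>
    Sum.elim (fun q => (⟨gs q x, hgs01 q x⟩ : Set.Icc (0:ℝ) 1))
      (fun p => (⟨ws p x, hw01 p x⟩ : Set.Icc (0:ℝ) 1)) j with hF_def
  have hFc : Continuous F := by
    refine continuous_pi fun j => ?_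
    cases j with
    | inl q => exact ((hgsc q).subtype_mk _)
    | inr p => exact ((hwc p).subtype_mk _)
  -- F is injective
  have hFinj : Function.Injective F := by
    intro x y hxy
    by_contra hne
    obtain ⟨V, hVB, hxV, hVsub⟩ := hB.exists_subset_of_mem_open
      (show x ∈ ({y}ᶜ : Set X) from hne) isOpen_compl_singleton
    obtain ⟨U, hUB, hxU, hUV⟩ := hB.exists_closure_subset (hB.mem_nhds hVB hxV)
    set q : ↥s := ⟨(U, V), ⟨hUB, hVB⟩, hUV⟩
    have h0 : gs q x = 0 := hgs0 q (subset_closure hxU)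
    have h1 : gs q y = 1 := hgs1 q fun hyV => (hVsub hyV) rfl
    have := congrFun hxy (Sum.inl q)
    simp only [hF_def, Sum.elim_inl, Subtype.mk_eq_mk] at this
    rw [h0, h1] at this
    norm_num at this
  -- F is inducing
  have hFind : Topology.IsInducing F := by
    rw [Topology.isInducing_iff_nhds]
    intro x
    refine le_antisymm (Filter.tendsto_iff_comap.mp (hFc.tendsto x)) ?_
    intro N hN
    obtain ⟨N', hN'N, hN'open, hxN'⟩ := mem_nhds_iff.mp hN
    obtain ⟨V, hVB, hxV, hVsub⟩ := hB.exists_subset_of_mem_open hxN' hN'open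
    obtain ⟨U, hUB, hxU, hUV⟩ := hB.exists_closure_subset (hB.mem_nhds hVB hxV)
    set q : ↥s := ⟨(U, V), ⟨hUB, hVB⟩, hUV⟩
    refine Filter.mem_comap.2 ⟨(fun z : (↥s ⊕ ↥T) → Set.Icc (0:ℝ) 1 =>
      ((z (Sum.inl q) : ℝ))) ⁻¹' Set.Iio 1, ?_, ?_⟩
    · refine IsOpen.mem_nhds (isOpen_Iio.preimage
        (continuous_subtype_val.comp (continuous_apply _))) ?_
      have h0 : gs q x = 0 := hgs0 q (subset_closure hxU)
      simp only [Set.mem_preimage, hF_def, Sum.elim_inl, Set.mem_Iio, h0]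
      norm_num
    · intro y hy
      simp only [Set.mem_preimage, hF_def, Sum.elim_inl, Set.mem_Iio] at hy
      by_cases hyV : y ∈ V
      · exact hN'N (hVsub hyV)
      · rw [hgs1 q hyV] at hy
        norm_num at hy
  have hFemb : Topology.IsEmbedding F := ⟨hFind, hFinj⟩
  -- extend to ℕ-indexed product
  obtain ⟨ext, hextemb, hextF⟩ :=
    exists_extend_embedding (J := ↥s ⊕ ↥T) (⟨0, by norm_num⟩ : Set.Icc (0:ℝ) 1)
  set f : X → ℕ → Set.Icc (0:ℝ) 1 := fun x => ext (F x) with hf_def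
  have hfemb : Topology.IsEmbedding f := hextemb.comp hFemb
  refine ⟨f, hfemb, ?_⟩
  -- the compactification
  set Y := closure (Set.range f) with hY_def
  have hfY : ∀ x, f x ∈ Y := fun x => subset_closure ⟨x, rfl⟩
  set fY : X → ↥Y := fun x => ⟨f x, hfY x⟩ with hfY_def
  have hvalfY : ∀ S : Set X, Subtype.val '' (fY '' S) = f '' S := by
    intro S
    rw [Set.image_image]
  have hfYc : Continuous fY := (hextemb.continuous.comp hFc).subtype_mk _
  have hfYdr : DenseRange fY := by
    intro z
    rw [closure_subtype]
    have hrange : Subtype.val '' Set.range fY = Set.range f := by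
      rw [← Set.image_univ (f := fY), hvalfY, Set.image_univ]
    rw [hrange]
    exact z.2
  refine indecomposable_core hfYdr hfYc hB ?_
  intro U V hUB hVB hUne hVne hUV
  set p : ↥T := ⟨(U, V), ⟨hUB, hVB⟩, hUne, hVne, hUV⟩ with hp_def
  refine ⟨Aa p, Bb p, ?_, hwAU p, hwBU p, ?_⟩
  · rw [← closure_union, ← Set.image_union, hwcover p, Set.image_univ]
    exact hfYdr.closure_range
  · -- disjointness of the "shaved" closures, via the coordinate `Sum.inr p`
    have hdisjcl : ∀ z : ↥Y, z ∈ closure (fY '' (Aa p \ V)) →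
        z ∈ closure (fY '' (Bb p \ V)) → False := by
      intro z hz1 hz2
      rw [closure_subtype, hvalfY] at hz1 hz2
      set c : ℕ := Encodable.encode (Sum.inr p : ↥s ⊕ ↥T) with hc_def
      have hπc : Continuous fun w : ℕ → Set.Icc (0:ℝ) 1 => ((w c : ℝ)) :=
        continuous_subtype_val.comp (continuous_apply c)
      have himg0 : f '' (Aa p \ V) ⊆
          (fun w : ℕ → Set.Icc (0:ℝ) 1 => ((w c : ℝ))) ⁻¹' {0} := by
        rintro _ ⟨x, hx, rfl⟩
        simp only [Set.mem_preimage, Set.mem_singleton_iff, hf_def, hc_def, hextF]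
        simp only [hF_def, Sum.elim_inr]
        exact hw0 p hx
      have himg1 : f '' (Bb p \ V) ⊆
          (fun w : ℕ → Set.Icc (0:ℝ) 1 => ((w c : ℝ))) ⁻¹' {1} := by
        rintro _ ⟨x, hx, rfl⟩
        simp only [Set.mem_preimage, Set.mem_singleton_iff, hf_def, hc_def, hextF]
        simp only [hF_def, Sum.elim_inr]
        exact hw1 p hx
      have h0 : ((z : ℕ → Set.Icc (0:ℝ) 1) c : ℝ) = 0 :=
        (closure_minimal himg0 (isClosed_singleton.preimage hπc)) hz1
      have h1 : ((z : ℕ → Set.Icc (0:ℝ) 1) c : ℝ) = 1 :=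
        (closure_minimal himg1 (isClosed_singleton.preimage hπc)) hz2
      rw [h0] at h1
      norm_num at h1
    intro z hz
    obtain ⟨hz1, hz2⟩ := hz
    have hAsplit : fY '' Aa p = fY '' (Aa p \ V) ∪ fY '' (Aa p ∩ V) := by
      rw [← Set.image_union, Set.diff_union_inter]
    have hBsplit : fY '' Bb p = fY '' (Bb p \ V) ∪ fY '' (Bb p ∩ V) := by
      rw [← Set.image_union, Set.diff_union_inter]
    rw [hAsplit, closure_union] at hz1
    rw [hBsplit, closure_union] at hz2
    rcases hz1 with h1 | h1
    · rcases hz2 with h2 | h2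
      · exact (hdisjcl z h1 h2).elim
      · exact closure_mono (Set.image_mono Set.inter_subset_right) h2
    · exact closure_mono (Set.image_mono Set.inter_subset_right) h1
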